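/- Let C be the Poincaré map T(φ₀) = x(ω; φ₀) of the scalar periodic ODE u' = -d(t)u + a(t)g(u) + I(t), with d, a, I continuous ω-periodic, d(t) > 0, and g Lipschitz with constant G, satisfying -(d(t) - α) + G|a(t)| ≤ 0 for some α > 0. Then T is a contraction on ℝ with Lipschitz constant at most e^{-αω} < 1, and hence has a unique fixed point, whose orbit is the unique ω-periodic solution and attracts all solutions. -/

import Mathlib

/-- the Poincaré (time-ω) map of the scalar periodic ODE is a
contraction with constant e^{-αω} < 1; its unique fixed point generates the
unique ω-periodic solution, which attracts all solutions. -/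
theorem stmt12 (ω G α : ℝ) (d a I g : ℝ → ℝ) (x : ℝ → ℝ → ℝ)
    (hω : 0 < ω) (hd : Continuous d) (ha : Continuous a) (hI : Continuous I)
    (hdper : Function.Periodic d ω) (haper : Function.Periodic a ω)
    (hIper : Function.Periodic I ω)
    (hdpos : ∀ t, 0 < d t)
    (hg : ∀ p q, |g p - g q| ≤ G * |p - q|)
    (hα : 0 < α) (hstab : ∀ t, -(d t - α) + G * |a t| ≤ 0)
    (hflow0 : ∀ φ₀, x φ₀ 0 = φ₀)
    (hflow : ∀ φ₀ t, HasDerivAt (x φ₀)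
      (-d t * x φ₀ t + a t * g (x φ₀ t) + I t) t)
    (huniq : ∀ (u : ℝ → ℝ),
      (∀ t, HasDerivAt u (-d t * u t + a t * g (u t) + I t) t) → u = x (u 0)) :
    (∀ p q : ℝ, |x p ω - x q ω| ≤ Real.exp (-α * ω) * |p - q|) ∧
    Real.exp (-α * ω) < 1 ∧
    (∃! p : ℝ, x p ω = p) ∧
    ∀ p : ℝ, x p ω = p →
      Function.Periodic (x p) ω ∧
      ∀ φ₀, ∀ t ≥ (0 : ℝ), |x φ₀ t - x p t| ≤ Real.exp (-α * t) * |φ₀ - p| := by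
  -- Key decay estimate
  have key : ∀ p q : ℝ, ∀ t ≥ (0:ℝ),
      |x p t - x q t| ≤ Real.exp (-α * t) * |p - q| := by
    intro p q t ht
    set w : ℝ → ℝ := fun s => x p s - x q s with hwdef
    have hw' : ∀ s, HasDerivAt w
        (-d s * w s + a s * (g (x p s) - g (x q s))) s := by
      intro s
      have h := (hflow p s).sub (hflow q s)
      refine h.congr_deriv ?_
      simp only [hwdef]
      ring
    set y : ℝ → ℝ := fun s => Real.exp (α * s) * w s with hydef
    have hy' : ∀ s, HasDerivAt y
        (Real.exp (α * s) * (α * w s +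
          (-d s * w s + a s * (g (x p s) - g (x q s))))) s := by
      intro s
      have he : HasDerivAt (fun s : ℝ => Real.exp (α * s))
          (α * Real.exp (α * s)) s := by
        simpa [mul_comm, Function.comp_def] using
          (Real.hasDerivAt_exp (α * s)).comp s ((hasDerivAt_id s).const_mul α)
      have := he.mul (hw' s)
      refine this.congr_deriv ?_
      ring
    set z : ℝ → ℝ := fun s => (y s) ^ 2 with hzdef
    have hz' : ∀ s, HasDerivAt z
        (2 * y s ^ 1 * (Real.exp (α * s) * (α * w s +
          (-d s * w s + a s * (g (x p s) - g (x q s)))))) s := by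
      intro s
      exact (hy' s).pow 2
    have hderiv_nonpos : ∀ s, deriv z s ≤ 0 := by
      intro s
      rw [(hz' s).deriv]
      have hΔ := hg (x p s) (x q s)
      have hst := hstab s
      have hE : 0 < Real.exp (α * s) := Real.exp_pos _
      have habs : a s * (g (x p s) - g (x q s)) * w s ≤ G * |a s| * (w s) ^ 2 := by
        have h0 : (0:ℝ) ≤ |a s| := abs_nonneg _
        have h1 : (0:ℝ) ≤ |w s| := abs_nonneg _
        calc a s * (g (x p s) - g (x q s)) * w s
            ≤ |a s * (g (x p s) - g (x q s)) * w s| := le_abs_self _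
          _ = |a s| * |g (x p s) - g (x q s)| * |w s| := by
              rw [abs_mul, abs_mul]
          _ ≤ |a s| * (G * |w s|) * |w s| := by
              have hΔ' : |g (x p s) - g (x q s)| ≤ G * |w s| := hΔ
              exact mul_le_mul_of_nonneg_right
                (mul_le_mul_of_nonneg_left hΔ' h0) h1
          _ = G * |a s| * (w s) ^ 2 := by
              rw [← sq_abs (w s)]; ring
      simp only [hydef, pow_one]
      have hE2 : (0:ℝ) < 2 * Real.exp (α * s) ^ 2 := by positivity
      nlinarith [mul_le_mul_of_nonneg_left habs hE2.le,
        mul_le_mul_of_nonneg_right hst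
          (mul_nonneg hE2.le (sq_nonneg (w s))),
        sq_nonneg (w s), hE]
    have hdiff : Differentiable ℝ z := fun s => (hz' s).differentiableAt
    have hanti : Antitone z := by
      intro s₁ s₂ h
      exact antitone_of_deriv_nonpos hdiff hderiv_nonpos h
    have hz0 : z 0 = (p - q) ^ 2 := by
      simp [hzdef, hydef, hwdef, hflow0]
    have hzt : z t ≤ (p - q) ^ 2 := hz0 ▸ hanti ht
    -- from (exp(αt) * w t)^2 ≤ (p-q)^2 deduce the bound
    have habsle : |y t| ≤ |p - q| := by
      have := Real.sqrt_le_sqrt hzt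
      rw [Real.sqrt_sq_eq_abs, Real.sqrt_sq_eq_abs] at this
      exact this
    have hyabs : |y t| = Real.exp (α * t) * |w t| := by
      rw [hydef]
      simp [abs_mul, abs_of_pos (Real.exp_pos (α * t))]
    rw [hyabs] at habsle
    have hEpos : 0 < Real.exp (α * t) := Real.exp_pos _
    have h2 : (Real.exp (α * t))⁻¹ * (Real.exp (α * t) * |w t|) ≤
        (Real.exp (α * t))⁻¹ * |p - q| :=
      mul_le_mul_of_nonneg_left habsle (inv_nonneg.mpr hEpos.le)
    rw [inv_mul_cancel_left₀ (ne_of_gt hEpos)] at h2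
    rw [neg_mul, Real.exp_neg]
    exact h2
  have hlt : Real.exp (-α * ω) < 1 := by
    rw [Real.exp_lt_one_iff]
    nlinarith
  refine ⟨fun p q => key p q ω hω.le, hlt, ?_, ?_⟩
  · -- unique fixed point via contraction
    set k := Real.exp (-α * ω) with hk
    have hkpos : 0 < k := Real.exp_pos _
    set K : NNReal := ⟨k, hkpos.le⟩ with hK
    have hlip : LipschitzWith K (fun p => x p ω) := by
      apply LipschitzWith.of_dist_le_mul
      intro p q
      simp only [Real.dist_eq]
      exact key p q ω hω.le
    have hcontr : ContractingWith K (fun p => x p ω) := by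
      refine ⟨?_, hlip⟩
      rw [← NNReal.coe_lt_coe]
      exact hlt
    refine ⟨hcontr.fixedPoint (fun p => x p ω), ?_, ?_⟩
    · exact hcontr.fixedPoint_isFixedPt
    · intro q hq
      exact hcontr.fixedPoint_unique hq
  · intro p hp
    constructor
    · -- periodicity
      intro t
      have hu : ∀ s, HasDerivAt (fun s => x p (s + ω))
          (-d s * x p (s + ω) + a s * g (x p (s + ω)) + I s) s := by
        intro s
        have h1 : HasDerivAt (fun s : ℝ => s + ω) 1 s :=
          (hasDerivAt_id s).add_const ω
        have h2 := (hflow p (s + ω)).comp s h1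
        rw [hdper s, haper s, hIper s] at h2
        simpa [Function.comp_def] using h2
      have := huniq (fun s => x p (s + ω)) hu
      have h0 : (fun s => x p (s + ω)) 0 = p := by simp [hp]
      rw [zero_add, hp] at this
      exact congrFun this t
    · intro φ₀ t ht
      exact key φ₀ p t ht
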